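/- Let G be a graph, r ≥ 2, and suppose G contains K_{r,r} as a subgraph with parts A and B. Then G has a feedback vertex set of size at most k if and only if there exists a set X of r−1 vertices with X ⊆ A or X ⊆ B such that G − X has a feedback vertex set of size at most k−(r−1). -/

import Mathlib

open SimpleGraph Finset

/-- `S` is a feedback vertex set of `G`: removing `S` leaves an acyclic graph. -/
def IsFVS {V : Type*} (G : SimpleGraph V) (S : Set V) : Prop :=
  (G.induce Sᶜ).IsAcyclic

lemma fvs_claim {V : Type*} [DecidableEq V] (G : SimpleGraph V) (r : ℕ) (hr : 2 ≤ r)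
    (A B : Finset V) (hA : A.card = r) (hB : B.card = r)
    (hadj : ∀ a ∈ A, ∀ b ∈ B, G.Adj a b) (S : Finset V) (hS : IsFVS G ↑S) :
    r - 1 ≤ (S ∩ A).card ∨ r - 1 ≤ (S ∩ B).card := by
  by_contra h
  push_neg at h
  obtain ⟨h1, h2⟩ := h
  have hAS : 2 ≤ (A \ S).card := by
    have := Finset.card_inter_add_card_sdiff A S
    have : (A ∩ S).card = (S ∩ A).card := by rw [Finset.inter_comm]
    omega
  have hBS : 2 ≤ (B \ S).card := by
    have := Finset.card_inter_add_card_sdiff B S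
    have : (B ∩ S).card = (S ∩ B).card := by rw [Finset.inter_comm]
    omega
  obtain ⟨a1, ha1, a2, ha2, hane⟩ := Finset.one_lt_card.mp hAS
  obtain ⟨b1, hb1, b2, hb2, hbne⟩ := Finset.one_lt_card.mp hBS
  simp only [Finset.mem_sdiff] at ha1 ha2 hb1 hb2
  have hab11 : G.Adj a1 b1 := hadj a1 ha1.1 b1 hb1.1
  have hab12 : G.Adj a1 b2 := hadj a1 ha1.1 b2 hb2.1
  have hab21 : G.Adj a2 b1 := hadj a2 ha2.1 b1 hb1.1
  have hab22 : G.Adj a2 b2 := hadj a2 ha2.1 b2 hb2.1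
  -- vertices in the induced graph
  have ma1 : a1 ∈ (↑S : Set V)ᶜ := by simpa using ha1.2
  have ma2 : a2 ∈ (↑S : Set V)ᶜ := by simpa using ha2.2
  have mb1 : b1 ∈ (↑S : Set V)ᶜ := by simpa using hb1.2
  have mb2 : b2 ∈ (↑S : Set V)ᶜ := by simpa using hb2.2
  set H := G.induce (↑S : Set V)ᶜ with hH
  have e11 : H.Adj ⟨a1, ma1⟩ ⟨b1, mb1⟩ := by simp [hH, hab11]
  have e21 : H.Adj ⟨b1, mb1⟩ ⟨a2, ma2⟩ := by simp [hH, hab21.symm]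
  have e12 : H.Adj ⟨a1, ma1⟩ ⟨b2, mb2⟩ := by simp [hH, hab12]
  have e22 : H.Adj ⟨b2, mb2⟩ ⟨a2, ma2⟩ := by simp [hH, hab22.symm]
  have hane' : a1 ≠ a2 := hane
  have w1 : H.Walk ⟨a1, ma1⟩ ⟨a2, ma2⟩ := Walk.cons e11 (Walk.cons e21 Walk.nil)
  have w2 : H.Walk ⟨a1, ma1⟩ ⟨a2, ma2⟩ := Walk.cons e12 (Walk.cons e22 Walk.nil)
  have hp1 : (Walk.cons e11 (Walk.cons e21 Walk.nil)).IsPath := by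
    simp [Walk.isPath_def, Subtype.ext_iff, hane', hab11.ne, hab21.ne']
  have hp2 : (Walk.cons e12 (Walk.cons e22 Walk.nil)).IsPath := by
    simp [Walk.isPath_def, Subtype.ext_iff, hane', hab12.ne, hab22.ne']
  have huniq := (SimpleGraph.isAcyclic_iff_path_unique.mp hS)
    ⟨_, hp1⟩ ⟨_, hp2⟩
  have : b1 = b2 := by
    have := congrArg (fun p : H.Path _ _ => p.val.support) huniq
    simpa [Walk.support, Subtype.ext_iff] using this
  exact hbne this

lemma fvs_half {V : Type*} [DecidableEq V] (G : SimpleGraph V) (r k : ℕ)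
    (A : Finset V) (S : Finset V) (hSk : S.card ≤ k) (hS : IsFVS G ↑S)
    (hcard : r - 1 ≤ (S ∩ A).card) :
    ∃ X : Finset V, X.card = r - 1 ∧ X ⊆ A ∧
      ∃ S' : Finset V, Disjoint S' X ∧ S'.card + (r - 1) ≤ k ∧ IsFVS G ↑(X ∪ S') := by
  obtain ⟨X, hXsub, hXcard⟩ := Finset.exists_subset_card_eq hcard
  refine ⟨X, hXcard, hXsub.trans Finset.inter_subset_right, S \ X, Finset.sdiff_disjoint, ?_, ?_⟩
  · have hXS : X ⊆ S := hXsub.trans Finset.inter_subset_left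
    have := Finset.card_sdiff_of_subset hXS
    have := Finset.card_le_card hXS
    omega
  · have hXS : X ⊆ S := hXsub.trans Finset.inter_subset_left
    rw [Finset.union_sdiff_of_subset hXS]
    exact hS

/-- If `G` contains `K_{r,r}` as a subgraph with parts `A` and `B` (`r ≥ 2`), then `G` has a
feedback vertex set of size at most `k` iff there is a set `X` of `r - 1` vertices with
`X ⊆ A` or `X ⊆ B` such that `G - X` has a feedback vertex set of size at most `k - (r-1)`. -/
theorem stmt2 {V : Type*} [DecidableEq V] (G : SimpleGraph V) (r k : ℕ) (hr : 2 ≤ r)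
    (A B : Finset V) (hA : A.card = r) (hB : B.card = r) (hAB : Disjoint A B)
    (hadj : ∀ a ∈ A, ∀ b ∈ B, G.Adj a b) :
    (∃ S : Finset V, S.card ≤ k ∧ IsFVS G ↑S) ↔
      ∃ X : Finset V, X.card = r - 1 ∧ (X ⊆ A ∨ X ⊆ B) ∧
        ∃ S' : Finset V, Disjoint S' X ∧ S'.card + (r - 1) ≤ k ∧ IsFVS G ↑(X ∪ S') := by
  constructor
  · rintro ⟨S, hSk, hS⟩
    rcases fvs_claim G r hr A B hA hB hadj S hS with hc | hc
    · obtain ⟨X, h1, h2, h3⟩ := fvs_half G r k A S hSk hS hc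
      exact ⟨X, h1, Or.inl h2, h3⟩
    · have hadj' : ∀ b ∈ B, ∀ a ∈ A, G.Adj b a := fun b hb a ha => (hadj a ha b hb).symm
      obtain ⟨X, h1, h2, h3⟩ := fvs_half G r k B S hSk hS hc
      exact ⟨X, h1, Or.inr h2, h3⟩
  · rintro ⟨X, hXcard, _, S', hdisj, hcard, hfvs⟩
    refine ⟨X ∪ S', ?_, hfvs⟩
    have := Finset.card_union_le X S'
    omega
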